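/- Fix an even integer l ≥ 2, let ζ = e^{2πi/l}, ω = e^{πi/l}, let P ∈ M_l(ℂ) be the cyclic permutation matrix (P_{i,i+1} = 1 for 1 ≤ i ≤ l−1, P_{l,1} = 1, other entries 0) and Q = diag(ζ, ζ², …, ζ^l), and for r, m ∈ ℤ set a_{r,m} = ω^{rm}·Q^r·P^m and c_{r,m} = a_{r,m} − (−1)^m·ζ^r·a_{−r,m}. Let T₁ ∈ M_l(ℂ) be the matrix with (T₁)_{i, l+1−i} = (−1)^i for 1 ≤ i ≤ l and all other entries 0. Then span_ℂ{ c_{r,m} : r, m ∈ ℤ } = { X ∈ M_l(ℂ) : Xᵀ·T₁ = −T₁·X }; this set is a Lie subalgebra of gl_l(ℂ) of dimension l(l+1)/2, and it is isomorphic as a complex Lie algebra to the symplectic Lie algebra sp(l,ℂ). -/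

import Mathlib

open Complex Matrix

/-- The `l×l` complex matrix algebra, with rows and columns indexed cyclically. -/
abbrev MatL (l : ℕ) := Matrix (ZMod l) (ZMod l) ℂ

/-- `ζ = e^{2πi/l}`. -/
noncomputable def zetaL (l : ℕ) : ℂ := Complex.exp (2 * Real.pi * Complex.I / l)

/-- The cyclic permutation matrix `P` (with `P_{i,i+1} = 1` cyclically). -/
noncomputable def Pmat (l : ℕ) : MatL l :=
  Matrix.of fun i j => if j = i + 1 then (1 : ℂ) else 0

/-- The diagonal matrix `Q = diag(ζ, ζ², …, ζ^l)`. -/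
noncomputable def Qmat (l : ℕ) : MatL l :=
  Matrix.of fun i j => if i = j then zetaL l ^ (i.val + 1) else 0

/-- `ω = e^{πi/l}`. -/
noncomputable def omegaL (l : ℕ) : ℂ := Complex.exp (Real.pi * Complex.I / l)

/-- The matrices `a_{r,m} = ω^{rm} · Q^r · P^m` for `r, m ∈ ℤ`. -/
noncomputable def amat (l : ℕ) [NeZero l] (r m : ℤ) : MatL l :=
  omegaL l ^ (r * m) • (Qmat l ^ r * Pmat l ^ m)


/-- `c_{r,m} = a_{r,m} − (−1)^m ζ^r a_{−r,m}`. -/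
noncomputable def cmat (l : ℕ) [NeZero l] (r m : ℤ) : MatL l :=
  amat l r m - ((-1 : ℂ) ^ m * zetaL l ^ r) • amat l (-r) m

/-- For a fixed matrix `T`, the linear map `X ↦ Xᵀ·T + T·X`, whose kernel is the space of
matrices with `Xᵀ·T = −T·X`. -/
noncomputable def skewPair {n : Type*} [Fintype n] (T : Matrix n n ℂ) :
    Matrix n n ℂ →ₗ[ℂ] Matrix n n ℂ where
  toFun X := Xᵀ * T + T * X
  map_add' X Y := by
    simp only [Matrix.transpose_add, Matrix.add_mul, Matrix.mul_add]
    abel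
  map_smul' c X := by
    simp [Matrix.transpose_smul, Matrix.smul_mul, Matrix.mul_smul]

/-- The matrix `T₁` with `(T₁)_{i, l+1−i} = (−1)^i` (1-indexed) on the antidiagonal. -/
noncomputable def T1mat (l : ℕ) : MatL l :=
  Matrix.of fun i j => if i.val + j.val + 1 = l then (-1 : ℂ) ^ (i.val + 1) else 0

/-- The standard symplectic form `J` on `ℂ^l` (block form `[[0, 1], [−1, 0]]`). -/
noncomputable def Jmat (l : ℕ) : MatL l :=
  Matrix.of fun i j =>
    if i.val + l / 2 = j.val then (1 : ℂ) else if j.val + l / 2 = i.val then -1 else 0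

set_option linter.unusedSectionVars false
set_option linter.unusedVariables false
set_option maxHeartbeats 1000000
section basics
variable (l : ℕ) [NeZero l]

lemma omega_ne_zero : omegaL l ≠ 0 := Complex.exp_ne_zero _

lemma zeta_ne_zero : zetaL l ≠ 0 := Complex.exp_ne_zero _

lemma omega_sq : omegaL l ^ 2 = zetaL l := by
  rw [omegaL, zetaL, ← Complex.exp_nat_mul]
  ring_nf

lemma omega_pow_l : omegaL l ^ l = -1 := by
  rw [omegaL, ← Complex.exp_nat_mul]
  have h : (l : ℂ) ≠ 0 := Nat.cast_ne_zero.mpr (NeZero.ne l)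
  rw [show (l : ℂ) * (Real.pi * Complex.I / l) = Real.pi * Complex.I by field_simp]
  exact Complex.exp_pi_mul_I

lemma omega_pow_2l : omegaL l ^ (2 * l) = 1 := by
  rw [mul_comm, pow_mul, omega_pow_l]; norm_num

lemma zeta_eq : zetaL l = omegaL l ^ (2 : ℤ) := by
  rw [← omega_sq, zpow_two]; ring

lemma zeta_pow_l : zetaL l ^ l = 1 := by
  rw [← omega_sq, ← pow_mul, omega_pow_2l]

lemma omega_zpow_congr {a b : ℤ} (hab : (2 * l : ℤ) ∣ a - b) : omegaL l ^ a = omegaL l ^ b := by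
  obtain ⟨t, ht⟩ := hab
  have ha : a = b + (2 * l : ℤ) * t := by linarith
  rw [ha, zpow_add₀ (omega_ne_zero l), _root_.zpow_mul,
    show ((2:ℤ) * l) = ((2 * l : ℕ) : ℤ) by push_cast; ring, zpow_natCast, omega_pow_2l]
  simp

lemma m1pow {a b : ℕ} (h : a % 2 = b % 2) : (-1 : ℂ) ^ a = (-1 : ℂ) ^ b := by
  rcases Nat.even_or_odd a with ha | ha
  · rw [ha.neg_one_pow, (Nat.even_iff.mpr (by have := Nat.even_iff.mp ha; omega : b % 2 = 0)).neg_one_pow]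
  · rw [ha.neg_one_pow, (Nat.odd_iff.mpr (by have := Nat.odd_iff.mp ha; omega)).neg_one_pow]

lemma valInj {a b : ZMod l} (h : a.val = b.val) : a = b := by
  have ha : ((a.val : ℕ) : ZMod l) = a := by simp [ZMod.natCast_val, ZMod.cast_id]
  have hb : ((b.val : ℕ) : ZMod l) = b := by simp [ZMod.natCast_val, ZMod.cast_id]
  rw [← ha, ← hb, h]

lemma neg_one_sub_val (i : ZMod l) : (-1 - i).val = l - 1 - i.val := by
  have hi : i.val < l := ZMod.val_lt i
  have h1 : l - 1 - i.val < l := by omega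
  have h2 : ((l - 1 - i.val : ℕ) : ZMod l) = -1 - i := by
    have h3 : (l - 1 - i.val) + (1 + i.val) = l := by omega
    have h4 := congrArg (Nat.cast : ℕ → ZMod l) h3
    push_cast at h4
    rw [ZMod.natCast_self] at h4
    have h5 : ((i.val : ℕ) : ZMod l) = i := by simp [ZMod.natCast_val, ZMod.cast_id]
    rw [h5] at h4
    linear_combination h4
  rw [← h2, ZMod.val_cast_of_lt h1]

/-- integer congruence from a ZMod l equation -/
lemma zmod_int_congr {i j : ZMod l} {m : ℤ} (h : j = i + (m : ZMod l)) :
    ∃ t : ℤ, (j.val : ℤ) = i.val + m + l * t := by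
  have h0 : ((l : ℤ)) ∣ ((j.val : ℤ) - i.val - m) := by
    rw [← ZMod.intCast_zmod_eq_zero_iff_dvd]
    push_cast
    have h5 : ∀ a : ZMod l, ((a.val : ℕ) : ZMod l) = a := fun a => by
      simp [ZMod.natCast_val, ZMod.cast_id]
    rw [h5, h5, h]
    ring
  obtain ⟨t, ht⟩ := h0
  exact ⟨t, by linarith⟩

end basics






section pows
variable (l : ℕ) [NeZero l]

lemma Pmat_pow_apply (n : ℕ) (i j : ZMod l) :
    (Pmat l ^ n) i j = if j = i + (n : ZMod l) then 1 else 0 := by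
  induction n generalizing j with
  | zero => simp [Matrix.one_apply, eq_comm]
  | succ n ih =>
    rw [pow_succ, Matrix.mul_apply]
    have hterm : ∀ x, (Pmat l ^ n) i x * Pmat l x j
        = if x = i + (n : ZMod l) then (if j = (i + (n : ZMod l)) + 1 then (1:ℂ) else 0) else 0 := by
      intro x
      rw [ih]
      by_cases hx : x = i + (n : ZMod l) <;> simp [hx, Pmat]
    rw [Finset.sum_congr rfl (fun x _ => hterm x),
      Finset.sum_ite_eq' Finset.univ (i + (n : ZMod l))]
    simp only [Finset.mem_univ, if_true]
    have : i + ((n : ZMod l)) + 1 = i + (((n + 1 : ℕ)) : ZMod l) := by push_cast; ring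
    rw [this]

lemma Pmat_pow_l : Pmat l ^ l = 1 := by
  ext i j
  simp [Pmat_pow_apply, Matrix.one_apply, ZMod.natCast_self, eq_comm]

lemma Qmat_diag : Qmat l = Matrix.diagonal (fun i => zetaL l ^ (i.val + 1)) := by
  rfl

lemma Qmat_pow_apply (n : ℕ) : Qmat l ^ n = Matrix.diagonal (fun i => zetaL l ^ (n * (i.val + 1))) := by
  rw [Qmat_diag, Matrix.diagonal_pow]
  exact congrArg Matrix.diagonal (funext fun i => by
    simp only [Pi.pow_apply]
    rw [← pow_mul, mul_comm])

lemma Qmat_pow_l : Qmat l ^ l = 1 := by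
  rw [Qmat_pow_apply]
  have : ∀ i : ZMod l, zetaL l ^ (l * (i.val + 1)) = 1 := fun i => by
    rw [pow_mul, zeta_pow_l, one_pow]
  simp only [this]
  exact Matrix.diagonal_one

lemma zpow_reduce (A : MatL l) (hA : A ^ l = 1) (m : ℤ) : A ^ m = A ^ (m % l).toNat := by
  have hdet : IsUnit A.det := by
    have h1 : A.det ^ l = 1 := by rw [← Matrix.det_pow, hA, Matrix.det_one]
    exact IsUnit.of_mul_eq_one (A.det ^ (l - 1))
      (by rw [← pow_succ', Nat.sub_add_cancel (Nat.one_le_iff_ne_zero.mpr (NeZero.ne l))]; exact h1)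
  have h1 : m = (l : ℤ) * (m / l) + m % l := (Int.mul_ediv_add_emod m l).symm
  have h2 : (0 : ℤ) ≤ m % l := Int.emod_nonneg m (by exact_mod_cast NeZero.ne l)
  calc A ^ m = A ^ ((l : ℤ) * (m / l) + m % l) := by rw [← h1]
    _ = (A ^ (l : ℤ)) ^ (m / l) * A ^ (m % l) := by
        rw [Matrix.zpow_add hdet, Matrix.zpow_mul A hdet]
    _ = A ^ (m % l).toNat := by
        rw [zpow_natCast, hA, Matrix.one_zpow, one_mul]
        conv_lhs => rw [← Int.toNat_of_nonneg h2]
        rw [zpow_natCast]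

lemma natcast_mod_toNat (m : ℤ) : (((m % l).toNat : ℕ) : ZMod l) = (m : ZMod l) := by
  have h2 : (0 : ℤ) ≤ m % l := Int.emod_nonneg m (by exact_mod_cast NeZero.ne l)
  have : (((m % l).toNat : ℕ) : ZMod l) = (((m % l : ℤ)) : ZMod l) := by
    rw [← Int.cast_natCast, Int.toNat_of_nonneg h2]
  rw [this]
  rw [show (m % l : ℤ) = m - l * (m / l) by have := Int.mul_ediv_add_emod m l; linarith]
  push_cast [ZMod.natCast_self]
  ring

lemma int_mod_congr (r : ℤ) : ∃ t : ℤ, ((r % l).toNat : ℤ) = r + l * t := by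
  have h2 : (0 : ℤ) ≤ r % l := Int.emod_nonneg r (by exact_mod_cast NeZero.ne l)
  refine ⟨-(r / l), ?_⟩
  rw [Int.toNat_of_nonneg h2]
  have := Int.mul_ediv_add_emod r l
  linarith

lemma amat_apply (r m : ℤ) (i j : ZMod l) :
    amat l r m i j = if j = i + (m : ZMod l) then omegaL l ^ (r * (m + 2 * (i.val + 1))) else 0 := by
  rw [amat, zpow_reduce l _ (Qmat_pow_l l) r, zpow_reduce l _ (Pmat_pow_l l) m]
  rw [Matrix.smul_apply, Qmat_pow_apply, Matrix.diagonal_mul]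
  rw [Pmat_pow_apply, natcast_mod_toNat]
  by_cases hc : j = i + (m : ZMod l)
  · simp only [hc, if_true, mul_one, smul_eq_mul]
    obtain ⟨t, ht⟩ := int_mod_congr l r
    rw [show zetaL l = omegaL l ^ 2 from (omega_sq l).symm, ← pow_mul, ← zpow_natCast (omegaL l),
      ← zpow_add₀ (omega_ne_zero l)]
    apply omega_zpow_congr
    push_cast [ht]
    ring_nf
    refine ⟨t * (1 + i.val), by ring⟩
  · simp [hc]

end pows



section T1sec
variable (l : ℕ) [NeZero l]

lemma T1_apply_ne {i k : ZMod l} (h : k ≠ -1 - i) : T1mat l i k = 0 := by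
  rw [T1mat, Matrix.of_apply, if_neg]
  intro hc
  apply h
  apply valInj
  have h1 := neg_one_sub_val l i
  have h2 := ZMod.val_lt i
  have h3 := ZMod.val_lt k
  omega

lemma T1_apply_self (i : ZMod l) : T1mat l i (-1 - i) = (-1 : ℂ) ^ (i.val + 1) := by
  rw [T1mat, Matrix.of_apply, if_pos]
  have h1 := neg_one_sub_val l i
  have h2 := ZMod.val_lt i
  have h3 := Nat.pos_of_ne_zero (NeZero.ne l)
  omega

lemma T1_mul_apply (M : MatL l) (i j : ZMod l) :
    (T1mat l * M) i j = (-1 : ℂ) ^ (i.val + 1) * M (-1 - i) j := by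
  rw [Matrix.mul_apply, Finset.sum_eq_single (-1 - i)]
  · rw [T1_apply_self]
  · intro k _ hk
    rw [T1_apply_ne l hk, zero_mul]
  · intro h
    exact absurd (Finset.mem_univ _) h

lemma mul_T1_apply (M : MatL l) (i j : ZMod l) :
    (M * T1mat l) i j = (-1 : ℂ) ^ (l - j.val) * M i (-1 - j) := by
  rw [Matrix.mul_apply, Finset.sum_eq_single (-1 - j)]
  · have h1 : T1mat l (-1 - j) j = (-1 : ℂ) ^ (l - j.val) := by
      rw [T1mat, Matrix.of_apply, if_pos]
      · rw [neg_one_sub_val]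
        have h2 := ZMod.val_lt j
        congr 1
        omega
      · have h1 := neg_one_sub_val l j
        have h2 := ZMod.val_lt j
        have h3 := Nat.pos_of_ne_zero (NeZero.ne l)
        omega
    rw [h1, mul_comm]
  · intro k _ hk
    have : T1mat l k j = 0 := by
      rw [T1mat, Matrix.of_apply, if_neg]
      intro hc
      apply hk
      apply valInj
      have h1 := neg_one_sub_val l j
      have h2 := ZMod.val_lt j
      have h3 := ZMod.val_lt k
      omega
    rw [this, mul_zero]
  · intro h
    exact absurd (Finset.mem_univ _) h

lemma T1_transpose (hl : Even l) : (T1mat l)ᵀ = -(T1mat l) := by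
  ext i j
  have hfl : l % 2 = 0 := Nat.even_iff.mp hl
  have h2 := ZMod.val_lt j
  have h3 := ZMod.val_lt i
  rw [Matrix.transpose_apply, Matrix.neg_apply, T1mat, Matrix.of_apply, Matrix.of_apply]
  by_cases hc : i.val + j.val + 1 = l
  · rw [if_pos (by omega), if_pos hc]
    rw [show (-1 : ℂ) ^ (i.val + 1) = (-1 : ℂ) * (-1 : ℂ) ^ (i.val + 2) by ring_nf]
    rw [m1pow (show (j.val + 1) % 2 = (i.val + 2) % 2 by omega)]
    ring
  · rw [if_neg (by omega), if_neg hc, neg_zero]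

lemma T1_sq (hl : Even l) : (T1mat l) * (T1mat l) = -1 := by
  have hfl : l % 2 = 0 := Nat.even_iff.mp hl
  ext i j
  rw [T1_mul_apply, Matrix.neg_apply, Matrix.one_apply]
  have h2 := ZMod.val_lt j
  have h3 := ZMod.val_lt i
  have hv := neg_one_sub_val l i
  rw [T1mat, Matrix.of_apply]
  by_cases hc : i = j
  · subst hc
    rw [if_pos (by omega), if_pos rfl, ← pow_add, hv,
      m1pow (show ((i.val + 1) + ((l - 1 - i.val) + 1)) % 2 = 1 % 2 by omega), pow_one]
  · rw [if_neg (fun hcon => hc (valInj l (by omega)).symm), if_neg hc, mul_zero, neg_zero]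

lemma neg_one_eq_omega : (-1 : ℂ) = omegaL l ^ ((l : ℕ) : ℤ) := by
  rw [zpow_natCast, omega_pow_l]

lemma neg_one_pow_nat (k : ℕ) : (-1 : ℂ) ^ k = omegaL l ^ ((l * k : ℕ) : ℤ) := by
  rw [zpow_natCast, pow_mul, omega_pow_l]

lemma neg_one_zpow (m : ℤ) : (-1 : ℂ) ^ m = omegaL l ^ ((l : ℤ) * m) := by
  rw [show ((-1 : ℂ)) = omegaL l ^ ((l : ℕ) : ℤ) from neg_one_eq_omega l, ← _root_.zpow_mul]

lemma zeta_zpow (r : ℤ) : zetaL l ^ r = omegaL l ^ (2 * r) := by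
  rw [zeta_eq, ← _root_.zpow_mul]

lemma theta_amat (hl : Even l) (r m : ℤ) :
    T1mat l * (amat l r m)ᵀ * T1mat l = (-((-1 : ℂ) ^ m * zetaL l ^ r)) • amat l (-r) m := by
  ext i j
  rw [mul_T1_apply, T1_mul_apply, Matrix.transpose_apply, Matrix.smul_apply,
    amat_apply, amat_apply, neg_one_sub_val l j]
  have hcond : ((-1 : ZMod l) - i = -1 - j + (m : ZMod l)) ↔ (j = i + (m : ZMod l)) := by
    constructor <;> intro h <;> linear_combination h
  by_cases hc : j = i + (m : ZMod l)
  · rw [if_pos (hcond.mpr hc), if_pos hc]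
    obtain ⟨t, ht⟩ := zmod_int_congr l hc
    obtain ⟨hhalf, hhl⟩ := hl
    have hl2 : (l : ℤ) = 2 * hhalf := by exact_mod_cast (by omega : l = 2 * hhalf)
    have hj := ZMod.val_lt j
    have hrw : -(((-1 : ℂ)) ^ m * zetaL l ^ r) = (-1 : ℂ) * ((-1 : ℂ)) ^ m * zetaL l ^ r := by ring
    rw [hrw, neg_one_pow_nat l (l - j.val), neg_one_pow_nat l (i.val + 1),
      neg_one_zpow l m, zeta_zpow l r, neg_one_eq_omega l,
      ← zpow_add₀ (omega_ne_zero l), ← zpow_add₀ (omega_ne_zero l),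
      ← zpow_add₀ (omega_ne_zero l), ← zpow_add₀ (omega_ne_zero l),
      smul_eq_mul, ← zpow_add₀ (omega_ne_zero l)]
    apply omega_zpow_congr
    have e2 : ((l - j.val : ℕ) : ℤ) = l - j.val := by omega
    have e3 : ((l - 1 - j.val : ℕ) : ℤ) = l - 1 - j.val := by omega
    refine ⟨hhalf * (1 - t) - m + r - r * t, ?_⟩
    push_cast [e2, e3]
    rw [ht, hl2]
    ring
  · rw [if_neg (fun h => hc (hcond.mp h)), if_neg hc]
    simp

noncomputable def theta (l : ℕ) [NeZero l] : MatL l →ₗ[ℂ] MatL l where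
  toFun X := T1mat l * Xᵀ * T1mat l
  map_add' X Y := by simp [Matrix.transpose_add, Matrix.mul_add, Matrix.add_mul]
  map_smul' c X := by simp [Matrix.transpose_smul, Matrix.mul_smul, Matrix.smul_mul]

lemma theta_apply (X : MatL l) : theta l X = T1mat l * Xᵀ * T1mat l := rfl

lemma skewPair_apply {n : Type*} [Fintype n] (T X : Matrix n n ℂ) :
    skewPair T X = Xᵀ * T + T * X := rfl

lemma theta_fix_iff (hl : Even l) (X : MatL l) :
    X ∈ LinearMap.ker (skewPair (T1mat l)) ↔ theta l X = X := by
  rw [LinearMap.mem_ker, skewPair_apply, theta_apply]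
  constructor
  · intro h
    have h1 : Xᵀ * T1mat l = -(T1mat l * X) := eq_neg_of_add_eq_zero_left h
    rw [Matrix.mul_assoc, h1]
    calc T1mat l * -(T1mat l * X) = -((T1mat l * T1mat l) * X) := by
          rw [Matrix.mul_neg, Matrix.mul_assoc]
      _ = X := by rw [T1_sq l hl]; simp
  · intro h
    have h2 : T1mat l * (T1mat l * Xᵀ * T1mat l) = T1mat l * X := by rw [h]
    rw [← Matrix.mul_assoc, ← Matrix.mul_assoc, T1_sq l hl] at h2
    have h3 : -(Xᵀ * T1mat l) = T1mat l * X := by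
      rw [← h2]; simp [Matrix.neg_mul]
    rw [← h3]
    simp

lemma theta_cmat (hl : Even l) (r m : ℤ) : theta l (cmat l r m) = cmat l r m := by
  rw [cmat, map_sub, _root_.map_smul, theta_apply, theta_apply, theta_amat l hl, theta_amat l hl]
  rw [smul_smul, neg_neg]
  have hco : ((-1 : ℂ) ^ m * zetaL l ^ r) * ((-1 : ℂ) ^ m * zetaL l ^ (-r)) = 1 := by
    have h1 : ((-1 : ℂ) ^ m) * ((-1 : ℂ) ^ m) = 1 := by
      rw [← zpow_add₀ (by norm_num : (-1 : ℂ) ≠ 0)]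
      rw [show m + m = 2 * m by ring, _root_.zpow_mul]
      norm_num
    have h2 : zetaL l ^ r * zetaL l ^ (-r) = 1 := by
      rw [← zpow_add₀ (zeta_ne_zero l)]
      simp
    calc ((-1 : ℂ) ^ m * zetaL l ^ r) * ((-1 : ℂ) ^ m * zetaL l ^ (-r))
        = (((-1 : ℂ) ^ m) * ((-1 : ℂ) ^ m)) * (zetaL l ^ r * zetaL l ^ (-r)) := by ring
      _ = 1 := by rw [h1, h2, mul_one]
  rw [mul_neg, hco]
  show _ = amat l r m - ((-1 : ℂ) ^ m * zetaL l ^ r) • amat l (-r) m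
  simp only [neg_smul, one_smul, sub_neg_eq_add]
  abel

lemma zeta_primitive : IsPrimitiveRoot (zetaL l) l := by
  have := Complex.isPrimitiveRoot_exp l (NeZero.ne l)
  rwa [zetaL]

lemma zeta_zpow_sum {d : ℤ} (hd : ¬ ((l : ℤ) ∣ d)) :
    ∑ r ∈ Finset.range l, (zetaL l ^ d) ^ r = 0 := by
  have hx1 : zetaL l ^ d ≠ 1 := by
    intro h
    exact hd (((zeta_primitive l).zpow_eq_one_iff_dvd d).mp h)
  rw [geom_sum_eq hx1]
  have hxl : (zetaL l ^ d) ^ l = 1 := by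
    rw [← zpow_natCast (zetaL l ^ d), ← _root_.zpow_mul, mul_comm, _root_.zpow_mul,
      zpow_natCast, zeta_pow_l, _root_.one_zpow]
  rw [hxl, sub_self, zero_div]

lemma amat_comb (p q : ZMod l) :
    ∑ r ∈ Finset.range l, (omegaL l ^ (-(r : ℤ) * ((((q - p).val : ℕ) : ℤ) + 2 * (p.val + 1)))) •
      amat l r ((q - p).val : ℤ) = (l : ℂ) • Matrix.single p q 1 := by
  set m : ℤ := (((q - p).val : ℕ) : ℤ) with hm
  have hpq : p + ((m : ℤ) : ZMod l) = q := by
    have h0 : (((q - p).val : ℕ) : ZMod l) = q - p := by simp [ZMod.natCast_val, ZMod.cast_id]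
    rw [hm]
    push_cast
    rw [h0]
    ring
  ext i j
  rw [Matrix.sum_apply, Matrix.smul_apply, Matrix.single, Matrix.of_apply]
  simp only [Matrix.smul_apply, amat_apply, smul_eq_mul]
  by_cases hc : j = i + (m : ZMod l)
  · simp only [hc, if_true, mul_one]
    have hterm : ∀ r : ℕ, omegaL l ^ (-(r : ℤ) * (m + 2 * (p.val + 1))) *
        omegaL l ^ ((r : ℤ) * (m + 2 * (i.val + 1))) =
        (zetaL l ^ ((i.val : ℤ) - p.val)) ^ (r : ℕ) := by
      intro r
      rw [zeta_zpow, ← zpow_natCast (omegaL l ^ ((2 : ℤ) * (((i.val : ℤ)) - p.val))) r,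
        ← _root_.zpow_mul, ← zpow_add₀ (omega_ne_zero l)]
      congr 1
      ring
    rw [Finset.sum_congr rfl (fun r _ => hterm r)]
    by_cases hip : i = p
    · subst hip
      simp only [sub_self, zpow_zero, one_pow, Finset.sum_const, Finset.card_range,
        nsmul_eq_mul, mul_one]
      rw [if_pos ⟨trivial, hpq.symm⟩, mul_one]
    · have hd : ¬ ((l : ℤ) ∣ ((i.val : ℤ) - p.val)) := by
        intro hdvd
        have h0 : ((((i.val : ℤ) - p.val : ℤ)) : ZMod l) = 0 :=
          (ZMod.intCast_zmod_eq_zero_iff_dvd _ l).mpr hdvd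
        push_cast at h0
        have h5 : ∀ a : ZMod l, ((a.val : ℕ) : ZMod l) = a := fun a => by
          simp [ZMod.natCast_val, ZMod.cast_id]
        rw [h5, h5] at h0
        exact hip (sub_eq_zero.mp h0)
      rw [zeta_zpow_sum l hd, if_neg (fun hcon => hip hcon.1.symm), mul_zero]
  · have hz : ∀ r : ℕ, r ∈ Finset.range l → omegaL l ^ (-(r : ℤ) * (m + 2 * (p.val + 1))) *
        (if j = i + (m : ZMod l) then omegaL l ^ ((r : ℤ) * (m + 2 * (i.val + 1))) else 0) = 0 := by
      intro r _
      rw [if_neg hc, mul_zero]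
    rw [Finset.sum_congr rfl hz, Finset.sum_const_zero]
    have : ¬ (p = i ∧ q = j) := by
      rintro ⟨rfl, rfl⟩
      exact hc hpq.symm
    rw [if_neg this, mul_zero]

lemma span_a_top :
    Submodule.span ℂ {X : MatL l | ∃ r m : ℤ, X = amat l r m} = ⊤ := by
  rw [eq_top_iff]
  intro X _
  rw [Matrix.matrix_eq_sum_single X]
  apply Submodule.sum_mem
  intro p _
  apply Submodule.sum_mem
  intro q _
  have h1 : Matrix.single p q (X p q) = (X p q) • Matrix.single p q 1 := by
    rw [Matrix.smul_single, smul_eq_mul, mul_one]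
  rw [h1]
  apply Submodule.smul_mem
  have hl0 : (l : ℂ) ≠ 0 := Nat.cast_ne_zero.mpr (NeZero.ne l)
  have h2 : Matrix.single p q (1 : ℂ) = (l : ℂ)⁻¹ •
      ∑ r ∈ Finset.range l, (omegaL l ^ (-(r : ℤ) * ((((q - p).val : ℕ) : ℤ) + 2 * (p.val + 1)))) •
        amat l r ((q - p).val : ℤ) := by
    rw [amat_comb, smul_smul, inv_mul_cancel₀ hl0, one_smul]
  rw [h2]
  apply Submodule.smul_mem
  apply Submodule.sum_mem
  intro r _
  apply Submodule.smul_mem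
  exact Submodule.subset_span ⟨r, _, rfl⟩

lemma span_c_eq_ker (hl : Even l) :
    Submodule.span ℂ {X : MatL l | ∃ r m : ℤ, X = cmat l r m} =
      LinearMap.ker (skewPair (T1mat l)) := by
  apply le_antisymm
  · rw [Submodule.span_le]
    rintro X ⟨r, m, rfl⟩
    exact (theta_fix_iff l hl _).mpr (theta_cmat l hl r m)
  · intro X hX
    have hfix : theta l X = X := (theta_fix_iff l hl X).mp hX
    set π : MatL l →ₗ[ℂ] MatL l := (2 : ℂ)⁻¹ • (LinearMap.id + theta l) with hπ
    have hπX : π X = X := by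
      rw [hπ]
      simp only [LinearMap.smul_apply, LinearMap.add_apply, LinearMap.id_apply, hfix]
      rw [← two_smul ℂ X, smul_smul]
      norm_num
    have hπa : ∀ r m : ℤ, π (amat l r m) = (2 : ℂ)⁻¹ • cmat l r m := by
      intro r m
      rw [hπ]
      simp only [LinearMap.smul_apply, LinearMap.add_apply, LinearMap.id_apply]
      rw [show theta l (amat l r m) = T1mat l * (amat l r m)ᵀ * T1mat l from rfl,
        theta_amat l hl r m]
      congr 1
      rw [cmat, neg_smul, sub_eq_add_neg]
    have h1 : X ∈ Submodule.map π (Submodule.span ℂ {X : MatL l | ∃ r m : ℤ, X = amat l r m}) :=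
      ⟨X, by rw [span_a_top]; trivial, hπX⟩
    rw [Submodule.map_span] at h1
    refine Submodule.span_le.mpr ?_ h1
    rintro Y ⟨Z, ⟨r, m, rfl⟩, rfl⟩
    rw [hπa]
    exact Submodule.smul_mem _ _ (Submodule.subset_span ⟨r, m, rfl⟩)

lemma skew_bracket {n : Type*} [Fintype n] (T X Y : Matrix n n ℂ)
    (hX : skewPair T X = 0) (hY : skewPair T Y = 0) : skewPair T (X * Y - Y * X) = 0 := by
  rw [skewPair_apply] at hX hY ⊢
  have hX' : Xᵀ * T = -(T * X) := eq_neg_of_add_eq_zero_left hX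
  have hY' : Yᵀ * T = -(T * Y) := eq_neg_of_add_eq_zero_left hY
  have e1 : (X * Y)ᵀ * T = (T * Y) * X := by
    rw [Matrix.transpose_mul, Matrix.mul_assoc, hX', Matrix.mul_neg, ← Matrix.mul_assoc, hY']
    simp [Matrix.neg_mul]
  have e2 : (Y * X)ᵀ * T = (T * X) * Y := by
    rw [Matrix.transpose_mul, Matrix.mul_assoc, hY', Matrix.mul_neg, ← Matrix.mul_assoc, hX']
    simp [Matrix.neg_mul]
  rw [Matrix.transpose_sub, Matrix.sub_mul, Matrix.mul_sub, e1, e2]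
  simp only [Matrix.mul_assoc]
  abel

lemma ker_symm (hl : Even l) (X : MatL l) (hX : X ∈ LinearMap.ker (skewPair (T1mat l))) :
    (T1mat l * X)ᵀ = T1mat l * X := by
  rw [LinearMap.mem_ker, skewPair_apply] at hX
  have hX' : Xᵀ * T1mat l = -(T1mat l * X) := eq_neg_of_add_eq_zero_left hX
  rw [Matrix.transpose_mul, T1_transpose l hl, Matrix.mul_neg, hX', neg_neg]

lemma T1_cancel1 (hl : Even l) (M : MatL l) : T1mat l * (-(T1mat l) * M) = M := by
  rw [← Matrix.mul_assoc, Matrix.mul_neg, T1_sq l hl]; simp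

lemma T1_cancel2 (hl : Even l) (M : MatL l) : -(T1mat l) * (T1mat l * M) = M := by
  rw [← Matrix.mul_assoc, Matrix.neg_mul, T1_sq l hl]; simp

noncomputable def symEquiv (hl : Even l) :
    LinearMap.ker (skewPair (T1mat l)) ≃ₗ[ℂ] (Sym2 (ZMod l) → ℂ) where
  toFun X := Sym2.lift ⟨fun i j => (T1mat l * (X : MatL l)) i j, fun i j => by
    conv_lhs => rw [← ker_symm l hl _ X.2]
    rfl⟩
  map_add' X Y := by
    funext s
    induction s using Sym2.ind with
    | _ i j =>
      simp only [Sym2.lift_mk, Submodule.coe_add, Matrix.mul_add, Matrix.add_apply, Pi.add_apply]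
  map_smul' c X := by
    funext s
    induction s using Sym2.ind with
    | _ i j =>
      simp only [Sym2.lift_mk, SetLike.val_smul, Matrix.mul_smul, Matrix.smul_apply,
        Pi.smul_apply, RingHom.id_apply]
  invFun f := ⟨-(T1mat l) * Matrix.of (fun i j => f s(i, j)), by
    have hMs : (Matrix.of (fun i j => f s(i, j)) : MatL l)ᵀ = Matrix.of (fun i j => f s(i, j)) := by
      ext i j
      rw [Matrix.transpose_apply, Matrix.of_apply, Matrix.of_apply, Sym2.eq_swap]
    rw [LinearMap.mem_ker, skewPair_apply]
    set M : MatL l := Matrix.of (fun i j => f s(i, j)) with hM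
    have h1 : (-(T1mat l) * M)ᵀ = Mᵀ * T1mat l := by
      rw [Matrix.transpose_mul, Matrix.transpose_neg, T1_transpose l hl, neg_neg]
    rw [h1, hMs, Matrix.mul_assoc, ← Matrix.mul_assoc (T1mat l), Matrix.mul_neg,
      T1_sq l hl]
    simp⟩
  left_inv X := by
    apply Subtype.ext
    have h0 : Matrix.of (fun i j => Sym2.lift
        ⟨fun i j => (T1mat l * (X : MatL l)) i j, fun i j => by
          conv_lhs => rw [← ker_symm l hl _ X.2]
          rfl⟩ s(i, j)) = T1mat l * (X : MatL l) := by
      ext i j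
      rw [Matrix.of_apply, Sym2.lift_mk]
    show -(T1mat l) * _ = (X : MatL l)
    rw [h0, T1_cancel2 l hl]
  right_inv f := by
    funext s
    induction s using Sym2.ind with
    | _ i j =>
      simp only [Sym2.lift_mk]
      rw [T1_cancel1 l hl, Matrix.of_apply]

lemma dim_ker (hl : Even l) :
    Module.finrank ℂ (LinearMap.ker (skewPair (T1mat l))) = l * (l + 1) / 2 := by
  rw [(symEquiv l hl).finrank_eq, Module.finrank_fintype_fun_eq_card, Sym2.card, ZMod.card,
    Nat.choose_two_right, Nat.add_sub_cancel, Nat.mul_comm]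


noncomputable def sigmaF (l : ℕ) : ZMod l → ZMod l := fun b =>
  if b.val < l / 2 then b else ((l - 1 + l / 2 - b.val : ℕ) : ZMod l)

noncomputable def epsF (l : ℕ) : ZMod l → ℂ := fun b =>
  if b.val < l / 2 then 1 else (-1 : ℂ) ^ (b.val - l / 2 + 1)

noncomputable def Smat (l : ℕ) : MatL l :=
  Matrix.of fun a b => if a = sigmaF l b then epsF l b else 0

noncomputable def SmatInv (l : ℕ) : MatL l :=
  Matrix.of fun a b => if b = sigmaF l a then (epsF l a)⁻¹ else 0

section Ssec
variable (l : ℕ) [NeZero l]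

lemma eps_ne_zero (b : ZMod l) : epsF l b ≠ 0 := by
  rw [epsF]
  split
  · norm_num
  · exact pow_ne_zero _ (by norm_num)

lemma sigma_val (hl : Even l) (b : ZMod l) :
    (sigmaF l b).val = if b.val < l / 2 then b.val else l - 1 + l / 2 - b.val := by
  have hb := ZMod.val_lt b
  have he : l % 2 = 0 := Nat.even_iff.mp hl
  have h2 : l / 2 + l / 2 = l := by omega
  rw [sigmaF]
  split
  · rfl
  · rw [ZMod.val_cast_of_lt (by omega)]

lemma sigma_inj (hl : Even l) : Function.Injective (sigmaF l) := by
  intro a b hab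
  have h1 := congrArg ZMod.val hab
  rw [sigma_val l hl, sigma_val l hl] at h1
  have ha := ZMod.val_lt a
  have hb := ZMod.val_lt b
  have he : l % 2 = 0 := Nat.even_iff.mp hl
  have h2 : l / 2 + l / 2 = l := by omega
  apply valInj
  split at h1 <;> split at h1 <;> omega

lemma SmatInv_mul_Smat (hl : Even l) : SmatInv l * Smat l = 1 := by
  ext a b
  rw [Matrix.mul_apply, Finset.sum_eq_single (sigmaF l a)]
  · rw [SmatInv, Smat, Matrix.of_apply, Matrix.of_apply, if_pos rfl, Matrix.one_apply]
    by_cases hab : a = b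
    · subst hab
      rw [if_pos rfl, if_pos rfl, inv_mul_cancel₀ (eps_ne_zero l a)]
    · rw [if_neg (fun h => hab (sigma_inj l hl h)), if_neg hab, mul_zero]
  · intro k _ hk
    rw [SmatInv, Matrix.of_apply, if_neg hk, zero_mul]
  · intro h
    exact absurd (Finset.mem_univ _) h

lemma Smat_mul_SmatInv (hl : Even l) : Smat l * SmatInv l = 1 :=
  mul_eq_one_comm.mp (SmatInv_mul_Smat l hl)

lemma St_T1_S (hl : Even l) : (Smat l)ᵀ * T1mat l * Smat l = Jmat l := by
  have he : l % 2 = 0 := Nat.even_iff.mp hl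
  ext a b
  have ha := ZMod.val_lt a
  have hb := ZMod.val_lt b
  have h2 : l / 2 + l / 2 = l := by omega
  have h1 : ∀ q, ((Smat l)ᵀ * T1mat l) a q = epsF l a * T1mat l (sigmaF l a) q := by
    intro q
    rw [Matrix.mul_apply, Finset.sum_eq_single (sigmaF l a)]
    · rw [Matrix.transpose_apply, Smat, Matrix.of_apply, if_pos rfl]
    · intro p _ hp
      rw [Matrix.transpose_apply, Smat, Matrix.of_apply, if_neg hp, zero_mul]
    · exact fun h => absurd (Finset.mem_univ _) h
  rw [Matrix.mul_apply, Finset.sum_eq_single (sigmaF l b)]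
  · rw [h1, Smat, Matrix.of_apply, if_pos rfl, T1mat, Matrix.of_apply, Jmat, Matrix.of_apply,
      epsF, epsF, sigma_val l hl, sigma_val l hl]
    by_cases hA : a.val < l / 2 <;> by_cases hB : b.val < l / 2 <;>
      simp only [hA, hB, if_true, if_false]
    · rw [if_neg (by omega), if_neg (by omega), if_neg (by omega)]
      ring
    · by_cases hab : a.val + l / 2 = b.val
      · rw [if_pos (by omega), if_pos hab, one_mul, ← pow_add,
          m1pow (show (a.val + 1 + (b.val - l / 2 + 1)) % 2 = 0 % 2 by omega), pow_zero]
      · rw [if_neg (by omega), if_neg hab, if_neg (by omega)]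
        ring
    · by_cases hba : b.val + l / 2 = a.val
      · rw [if_pos (by omega), if_neg (by omega), if_pos hba, mul_one, ← pow_add,
          m1pow (show ((a.val - l / 2 + 1) + ((l - 1 + l / 2 - a.val) + 1)) % 2 = 1 % 2 by omega),
          pow_one]
      · rw [if_neg (by omega), if_neg (by omega), if_neg hba]
        ring
    · rw [if_neg (by omega), if_neg (by omega), if_neg (by omega)]
      ring
  · intro q _ hq
    rw [Smat, Matrix.of_apply, if_neg hq, mul_zero]
  · exact fun h => absurd (Finset.mem_univ _) h

lemma cancel_is (hl : Even l) : ∀ Z : MatL l, SmatInv l * (Smat l * Z) = Z := fun Z => by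
  rw [← Matrix.mul_assoc, SmatInv_mul_Smat l hl, Matrix.one_mul]

lemma cancel_si (hl : Even l) : ∀ Z : MatL l, Smat l * (SmatInv l * Z) = Z := fun Z => by
  rw [← Matrix.mul_assoc, Smat_mul_SmatInv l hl, Matrix.one_mul]

lemma cancel_tt (hl : Even l) : ∀ Z : MatL l, (SmatInv l)ᵀ * ((Smat l)ᵀ * Z) = Z := fun Z => by
  rw [← Matrix.mul_assoc, ← Matrix.transpose_mul, Smat_mul_SmatInv l hl, Matrix.transpose_one,
    Matrix.one_mul]

lemma cancel_tt2 (hl : Even l) : ∀ Z : MatL l, (Smat l)ᵀ * ((SmatInv l)ᵀ * Z) = Z := fun Z => by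
  rw [← Matrix.mul_assoc, ← Matrix.transpose_mul, SmatInv_mul_Smat l hl, Matrix.transpose_one,
    Matrix.one_mul]

lemma conj_mem_J (hl : Even l) (X : MatL l) (hX : X ∈ LinearMap.ker (skewPair (T1mat l))) :
    SmatInv l * X * Smat l ∈ LinearMap.ker (skewPair (Jmat l)) := by
  rw [LinearMap.mem_ker, skewPair_apply] at hX ⊢
  have key : (SmatInv l * X * Smat l)ᵀ * Jmat l + Jmat l * (SmatInv l * X * Smat l)
      = (Smat l)ᵀ * ((Xᵀ * T1mat l + T1mat l * X) * Smat l) := by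
    rw [← St_T1_S l hl]
    simp only [Matrix.transpose_mul, Matrix.mul_add, Matrix.add_mul, Matrix.mul_assoc,
      cancel_tt l hl, cancel_si l hl]
  rw [key, hX, Matrix.zero_mul, Matrix.mul_zero]

lemma T1_from_J (hl : Even l) : T1mat l = (SmatInv l)ᵀ * Jmat l * SmatInv l := by
  rw [← St_T1_S l hl]
  simp only [Matrix.mul_assoc]
  rw [Smat_mul_SmatInv l hl, Matrix.mul_one, cancel_tt l hl]

lemma conj_mem_T1 (hl : Even l) (Y : MatL l) (hY : Y ∈ LinearMap.ker (skewPair (Jmat l))) :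
    Smat l * Y * SmatInv l ∈ LinearMap.ker (skewPair (T1mat l)) := by
  rw [LinearMap.mem_ker, skewPair_apply] at hY ⊢
  have key : (Smat l * Y * SmatInv l)ᵀ * T1mat l + T1mat l * (Smat l * Y * SmatInv l)
      = (SmatInv l)ᵀ * ((Yᵀ * Jmat l + Jmat l * Y) * SmatInv l) := by
    rw [T1_from_J l hl]
    simp only [Matrix.transpose_mul, Matrix.mul_add, Matrix.add_mul, Matrix.mul_assoc,
      cancel_tt2 l hl, cancel_is l hl]
  rw [key, hY, Matrix.zero_mul, Matrix.mul_zero]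

noncomputable def conjEquiv (hl : Even l) :
    LinearMap.ker (skewPair (T1mat l)) ≃ₗ[ℂ] LinearMap.ker (skewPair (Jmat l)) where
  toFun X := ⟨SmatInv l * (X : MatL l) * Smat l, conj_mem_J l hl _ X.2⟩
  map_add' X Y := by
    apply Subtype.ext
    simp [Matrix.mul_add, Matrix.add_mul]
  map_smul' c X := by
    apply Subtype.ext
    simp [Matrix.mul_smul, Matrix.smul_mul]
  invFun Y := ⟨Smat l * (Y : MatL l) * SmatInv l, conj_mem_T1 l hl _ Y.2⟩
  left_inv X := by
    apply Subtype.ext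
    show Smat l * (SmatInv l * (X : MatL l) * Smat l) * SmatInv l = (X : MatL l)
    simp only [Matrix.mul_assoc]
    rw [Smat_mul_SmatInv l hl, Matrix.mul_one, cancel_si l hl]
  right_inv Y := by
    apply Subtype.ext
    show SmatInv l * (Smat l * (Y : MatL l) * SmatInv l) * Smat l = (Y : MatL l)
    simp only [Matrix.mul_assoc]
    rw [SmatInv_mul_Smat l hl, Matrix.mul_one, cancel_is l hl]

end Ssec

theorem stmt18 (l : ℕ) [NeZero l] (hl : Even l) (hl2 : 2 ≤ l) :
    -- the span of the `c_{r,m}` is exactly `{X : Xᵀ T₁ = −T₁ X}`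
    Submodule.span ℂ {X : MatL l | ∃ r m : ℤ, X = cmat l r m} =
      LinearMap.ker (skewPair (T1mat l)) ∧
    -- this space is a Lie subalgebra of `gl_l(ℂ)` ...
    (∀ X Y : MatL l, X ∈ LinearMap.ker (skewPair (T1mat l)) →
      Y ∈ LinearMap.ker (skewPair (T1mat l)) →
      X * Y - Y * X ∈ LinearMap.ker (skewPair (T1mat l))) ∧
    -- ... of dimension l(l+1)/2 ...
    Module.finrank ℂ (LinearMap.ker (skewPair (T1mat l))) = l * (l + 1) / 2 ∧
    -- ... isomorphic as a complex Lie algebra to `sp(l,ℂ) = {X : Xᵀ J = −J X}`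
    ∃ e : LinearMap.ker (skewPair (T1mat l)) ≃ₗ[ℂ] LinearMap.ker (skewPair (Jmat l)),
      ∀ X Y : LinearMap.ker (skewPair (T1mat l)),
        ∃ Z : LinearMap.ker (skewPair (T1mat l)),
          (Z : MatL l) = (X : MatL l) * Y - (Y : MatL l) * X ∧
          (e Z : MatL l) = (e X : MatL l) * (e Y) - (e Y : MatL l) * (e X) := by
  refine ⟨span_c_eq_ker l hl, ?_, dim_ker l hl, ⟨conjEquiv l hl, ?_⟩⟩
  · intro X Y hX hY
    exact LinearMap.mem_ker.mpr
      (skew_bracket _ _ _ (LinearMap.mem_ker.mp hX) (LinearMap.mem_ker.mp hY))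
  · intro X Y
    refine ⟨⟨(X : MatL l) * Y - (Y : MatL l) * X, LinearMap.mem_ker.mpr
      (skew_bracket _ _ _ (LinearMap.mem_ker.mp X.2) (LinearMap.mem_ker.mp Y.2))⟩, rfl, ?_⟩
    show SmatInv l * (((X : MatL l) * Y - (Y : MatL l) * X)) * Smat l =
      (SmatInv l * (X : MatL l) * Smat l) * (SmatInv l * (Y : MatL l) * Smat l) -
      (SmatInv l * (Y : MatL l) * Smat l) * (SmatInv l * (X : MatL l) * Smat l)
    simp only [Matrix.mul_sub, Matrix.sub_mul, Matrix.mul_assoc, cancel_si l hl]
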